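/- Let ‖·‖ be a norm on c₀₀ satisfying equation (2.2). Let n ∈ ℕ and let (x_i)_{i=1}^n be a block basis of (e_i) such that each x_i is an ℓ₁^{k_i}-average with constant 2, and set k₀ = min{k_i : 1 ≤ i ≤ n}. If ℓ ∈ ℕ satisfies (f(ℓ) − 1)/ℓ > 12n·k₀^{−1/2}, then for all scalars (a_i)_{i=1}^n ⊆ [−1,1] with ‖∑_{i=1}^n a_i x_i‖ = 1 one has ‖∑_{i=1}^n a_i x_i‖_ℓ < ‖∑_{i=1}^n a_i x_i‖. -/

import Mathlib

open Finset

/-- `c₀₀`: finitely supported functions `ℕ → ℝ`. -/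
abbrev C00 := ℕ →₀ ℝ

/-- `f(t) = log₂(1+t)`. -/
noncomputable def f (t : ℝ) : ℝ := Real.logb 2 (1 + t)

/-- `E < F` for finite sets: every element of `E` is less than every element of `F`. -/
def FinsetLT (E F : Finset ℕ) : Prop := ∀ i ∈ E, ∀ j ∈ F, i < j

/-- `Ex`: coordinatewise product of `x` with the indicator of `E`. -/
noncomputable def restr (E : Finset ℕ) (x : C00) : C00 := x.filter (· ∈ E)

/-- `N` is a norm on `c₀₀`. -/
def IsNorm (N : C00 → ℝ) : Prop :=
  (∀ x y, N (x + y) ≤ N x + N y) ∧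
  (∀ (c : ℝ) (x), N (c • x) = |c| * N x) ∧
  (∀ x, x ≠ 0 → 0 < N x)

/-- the sup norm `‖x‖_∞`. -/
noncomputable def supNorm (x : C00) : ℝ := ⨆ i, |x i|

/-- `((m_i, E_i))_{i=1}^ℓ` is admissible: `2 ≤ m₁ < ⋯ < m_ℓ`, `E₁ < ⋯ < E_ℓ`,
and `f(m_{i+1}) > ∑_{j=1}^i |E_j|`. -/
def Admissible (ℓ : ℕ) (m : Fin ℓ → ℕ) (E : Fin ℓ → Finset ℕ) : Prop :=
  (∀ i, 2 ≤ m i) ∧ StrictMono m ∧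
  (∀ i j : Fin ℓ, i < j → FinsetLT (E i) (E j)) ∧
  ∀ i j : Fin ℓ, (i : ℕ) + 1 = (j : ℕ) →
    (∑ t ∈ Finset.Iic i, ((E t).card : ℝ)) < f (m j)

/-- `|||x|||_m = sup{(1/m) ∑_{i=1}^m ‖F_i x‖ : F₁ < ⋯ < F_m}`. -/
noncomputable def tnorm (N : C00 → ℝ) (m : ℕ) (x : C00) : ℝ :=
  sSup {r | ∃ F : Fin m → Finset ℕ,
    (∀ i j : Fin m, i < j → FinsetLT (F i) (F j)) ∧
    r = (1 / (m : ℝ)) * ∑ i, N (restr (F i) x)}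

/-- `‖x‖_ℓ = sup{(1/f(ℓ)) ∑_{i=1}^ℓ |||E_i x|||_{m_i} : ((m_i,E_i))_{i=1}^ℓ admissible}`. -/
noncomputable def normL (N : C00 → ℝ) (ℓ : ℕ) (x : C00) : ℝ :=
  sSup {r | ∃ (m : Fin ℓ → ℕ) (E : Fin ℓ → Finset ℕ), Admissible ℓ m E ∧
    r = (1 / f ℓ) * ∑ i, tnorm N (m i) (restr (E i) x)}

/-- `‖x‖_{(ℓ,m₀)}`: as `‖x‖_ℓ` but restricted to admissible families with `m₁ ≥ m₀`. -/
noncomputable def normLM (N : C00 → ℝ) (ℓ m₀ : ℕ) (x : C00) : ℝ :=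
  sSup {r | ∃ (m : Fin ℓ → ℕ) (E : Fin ℓ → Finset ℕ), Admissible ℓ m E ∧
    (∀ i, m₀ ≤ m i) ∧
    r = (1 / f ℓ) * ∑ i, tnorm N (m i) (restr (E i) x)}

/-- Equation (2.2):
`‖x‖ = max{‖x‖_∞, sup{(1/f(ℓ)) ∑ |||E_i x|||_{m_i} : ℓ ∈ ℕ, ((m_i,E_i)) admissible}}`. -/
def Eq22 (N : C00 → ℝ) : Prop :=
  ∀ x, N x = max (supNorm x)
    (sSup {r | ∃ (ℓ : ℕ) (m : Fin ℓ → ℕ) (E : Fin ℓ → Finset ℕ), Admissible ℓ m E ∧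
      r = (1 / f ℓ) * ∑ i, tnorm N (m i) (restr (E i) x)})

/-- A finite block basis: nonzero vectors with successive supports. -/
def BlockSeqFin {n : ℕ} (y : Fin n → C00) : Prop :=
  (∀ i, y i ≠ 0) ∧ ∀ i j : Fin n, i < j → FinsetLT (y i).support (y j).support

/-- An infinite block basis of `(e_i)`: nonzero vectors with successive supports. -/
def BlockSeqInf (y : ℕ → C00) : Prop :=
  (∀ i, y i ≠ 0) ∧ ∀ i, FinsetLT (y i).support (y (i + 1)).support

/-- `(z_k)_{k=1}^n` is a (finite) block basis of `(y_i)`. -/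
def FiniteBlockOf {n : ℕ} (z : Fin n → C00) (y : ℕ → C00) : Prop :=
  ∃ (B : Fin n → Finset ℕ) (c : ℕ → ℝ),
    (∀ k k' : Fin n, k < k' → FinsetLT (B k) (B k')) ∧
    (∀ k, z k = ∑ i ∈ B k, c i • y i) ∧ ∀ k, z k ≠ 0

/-- `x` is an `ℓ_p^k`-average with constant `C`. -/
def IsLpAverage (N : C00 → ℝ) (p : ℝ) (k : ℕ) (C : ℝ) (x : C00) : Prop :=
  ∃ y : Fin k → C00, BlockSeqFin y ∧ (∀ i, N (y i) = 1) ∧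
    (∀ a : Fin k → ℝ,
      C⁻¹ * (∑ i, |a i| ^ p) ^ (1 / p) ≤ N (∑ i, a i • y i) ∧
      N (∑ i, a i • y i) ≤ C * (∑ i, |a i| ^ p) ^ (1 / p)) ∧
    x = ((k : ℝ) ^ (-(1 / p))) • ∑ i, y i

/-- `C_p = 4(1 - 2^{-1/p})⁻¹`. -/
noncomputable def Cp (p : ℝ) : ℝ := 4 * (1 - (2 : ℝ) ^ (-(1 / p)))⁻¹

-- ===== auxiliary lemmas =====
section A
variable {N : C00 → ℝ}

lemma restr_apply (E : Finset ℕ) (x : C00) (s : ℕ) :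
    restr E x s = if s ∈ E then x s else 0 := Finsupp.filter_apply _ _ _

lemma restr_add (E : Finset ℕ) (x y : C00) :
    restr E (x + y) = restr E x + restr E y := Finsupp.filter_add

lemma restr_smul (E : Finset ℕ) (c : ℝ) (x : C00) :
    restr E (c • x) = c • restr E x := Finsupp.filter_smul

lemma restr_zero (E : Finset ℕ) : restr E 0 = 0 := Finsupp.filter_zero _

lemma restr_sum {ι : Type*} (E : Finset ℕ) (t : Finset ι) (g : ι → C00) :
    restr E (∑ i ∈ t, g i) = ∑ i ∈ t, restr E (g i) := by
  classical
  induction t using Finset.cons_induction with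
  | empty => simp [restr_zero]
  | cons a s ha ih => rw [Finset.sum_cons, Finset.sum_cons, restr_add, ih]

lemma restr_restr (E F : Finset ℕ) (x : C00) :
    restr E (restr F x) = restr (E ∩ F) x := by
  ext s
  simp only [restr_apply, Finset.mem_inter]
  split_ifs with h1 h2 h3 h3 <;> tauto

lemma restr_support (E : Finset ℕ) (x : C00) :
    (restr E x).support = x.support.filter (· ∈ E) := Finsupp.support_filter _ _

lemma restr_eq_zero {E : Finset ℕ} {x : C00} (h : ¬ (E ∩ x.support).Nonempty) :
    restr E x = 0 := by
  ext s
  rw [restr_apply]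
  split_ifs with hs
  · by_contra hx
    exact h ⟨s, Finset.mem_inter.mpr ⟨hs, Finsupp.mem_support_iff.mpr hx⟩⟩
  · rfl

lemma N_zero (hN : IsNorm N) : N 0 = 0 := by
  have := hN.2.1 0 0
  simpa using this

lemma N_nonneg (hN : IsNorm N) (x : C00) : 0 ≤ N x := by
  rcases eq_or_ne x 0 with rfl | h
  · rw [N_zero hN]
  · exact (hN.2.2 x h).le

lemma N_sum_le (hN : IsNorm N) {ι : Type*} (t : Finset ι) (g : ι → C00) :
    N (∑ i ∈ t, g i) ≤ ∑ i ∈ t, N (g i) := by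
  classical
  induction t using Finset.cons_induction with
  | empty => simp [N_zero hN]
  | cons a s ha ih =>
      rw [Finset.sum_cons, Finset.sum_cons]
      exact le_trans (hN.1 _ _) (by linarith)

/-- sum of absolute values of coordinates -/
noncomputable def Bsum (x : C00) : ℝ := ∑ s ∈ x.support, |x s|

lemma Bsum_nonneg (x : C00) : 0 ≤ Bsum x :=
  Finset.sum_nonneg fun _ _ => abs_nonneg _

lemma abs_apply_le_Bsum (x : C00) (i : ℕ) : |x i| ≤ Bsum x := by
  by_cases h : i ∈ x.support
  · exact Finset.single_le_sum (f := fun s => |x s|) (fun _ _ => abs_nonneg _) h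
  · rw [Finsupp.notMem_support_iff.mp h]
    simpa using Bsum_nonneg x

lemma abs_apply_le_supNorm (x : C00) (i : ℕ) : |x i| ≤ supNorm x :=
  le_ciSup ⟨Bsum x, by rintro _ ⟨j, rfl⟩; exact abs_apply_le_Bsum x j⟩ i

lemma supNorm_nonneg (x : C00) : 0 ≤ supNorm x :=
  le_trans (abs_nonneg _) (abs_apply_le_supNorm x 0)

lemma supNorm_restr_le (E : Finset ℕ) (x : C00) : supNorm (restr E x) ≤ supNorm x := by
  apply Real.iSup_le _ (supNorm_nonneg x)
  intro i
  rw [restr_apply]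
  split_ifs
  · exact abs_apply_le_supNorm x i
  · simpa using supNorm_nonneg x

lemma Bsum_restr (E : Finset ℕ) (x : C00) :
    Bsum (restr E x) = ∑ s ∈ x.support.filter (· ∈ E), |x s| := by
  rw [Bsum, restr_support]
  apply Finset.sum_congr rfl
  intro s hs
  rw [restr_apply, if_pos (Finset.mem_filter.mp hs).2]

lemma Bsum_restr_le (E : Finset ℕ) (x : C00) : Bsum (restr E x) ≤ Bsum x := by
  rw [Bsum_restr]
  exact Finset.sum_le_sum_of_subset_of_nonneg (Finset.filter_subset _ _)
    (fun _ _ _ => abs_nonneg _)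

lemma FinsetLT_mono {A B A' B' : Finset ℕ} (h : FinsetLT A B) (hA : A' ⊆ A) (hB : B' ⊆ B) :
    FinsetLT A' B' := fun i hi j hj => h i (hA hi) j (hB hj)

/-- at most one member of a pairwise-FinsetLT family contains a given point -/
lemma pairwiseLT_unique {ℓ : ℕ} {F : Fin ℓ → Finset ℕ}
    (hF : ∀ i j : Fin ℓ, i < j → FinsetLT (F i) (F j)) {s : ℕ} {i j : Fin ℓ}
    (hi : s ∈ F i) (hj : s ∈ F j) : i = j := by
  rcases lt_trichotomy i j with h | h | h
  · exact absurd (hF i j h s hi s hj) (lt_irrefl s)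
  · exact h
  · exact absurd (hF j i h s hj s hi) (lt_irrefl s)

lemma sum_ite_unique {ℓ : ℕ} {P : Fin ℓ → Prop} [DecidablePred P]
    (h : ∀ i j, P i → P j → i = j) {c : ℝ} (hc : 0 ≤ c) :
    ∑ j, (if P j then c else 0) ≤ c := by
  by_cases he : ∃ i, P i
  · obtain ⟨i₀, hi₀⟩ := he
    rw [Finset.sum_eq_single_of_mem i₀ (Finset.mem_univ _)
      (fun b _ hb => if_neg (fun hPb => hb (h b i₀ hPb hi₀)))]
    rw [if_pos hi₀]
  · push_neg at he
    simp only [he, if_false]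
    simpa using hc

lemma div_nat_mul_le {m : ℕ} {S c : ℝ} (hS : S ≤ (m : ℝ) * c) (hc : 0 ≤ c) :
    (1 / (m : ℝ)) * S ≤ c := by
  rcases Nat.eq_zero_or_pos m with rfl | hm
  · simp only [Nat.cast_zero, div_zero, zero_mul]
    simp at hS ⊢
    exact hc
  · have hm' : (0 : ℝ) < m := by exact_mod_cast hm
    calc (1 / (m : ℝ)) * S ≤ (1 / (m : ℝ)) * ((m : ℝ) * c) := by
          apply mul_le_mul_of_nonneg_left hS (by positivity)
      _ = c := by field_simp

lemma f_one_le {t : ℝ} (ht : 1 ≤ t) : 1 ≤ f t := by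
  rw [f]
  have : Real.logb 2 2 = 1 := Real.logb_self_eq_one (by norm_num)
  rw [← this]
  rw [Real.logb_le_logb (by norm_num) (by norm_num) (by linarith)]
  linarith

lemma f_nat_le (m : ℕ) : f m ≤ m := by
  rw [f, Real.logb_le_iff_le_rpow (by norm_num) (by positivity)]
  rw [Real.rpow_natCast]
  have h1 : 1 + m ≤ 2 ^ m := by have := @Nat.lt_two_pow_self m; omega
  exact_mod_cast Nat.cast_le.mpr h1

end A

section B
variable {N : C00 → ℝ}

lemma restr_empty (x : C00) : restr ∅ x = 0 := by
  ext s; simp [restr_apply]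

lemma restr_single (E : Finset ℕ) (s : ℕ) (c : ℝ) :
    restr E (Finsupp.single s c) = if s ∈ E then Finsupp.single s c else 0 := by
  unfold restr
  split_ifs with h
  · exact Finsupp.filter_single_of_pos _ h
  · exact Finsupp.filter_single_of_neg _ h

lemma supNorm_single_le (s : ℕ) : supNorm (Finsupp.single s (1:ℝ)) ≤ 1 := by
  apply Real.iSup_le _ (by norm_num)
  intro i
  simp only [Finsupp.single_apply]
  split_ifs <;> norm_num

lemma N_single_le_one (hN : IsNorm N) (hEq : Eq22 N) (s : ℕ) :
    N (Finsupp.single s (1:ℝ)) ≤ 1 := by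
  classical
  set e : C00 := Finsupp.single s (1:ℝ) with he
  have hNe : 0 ≤ N e := N_nonneg hN e
  -- tnorm of e is at most (1/2) N e when m' ≥ 2
  have htn : ∀ (m' : ℕ), 2 ≤ m' → ∀ (E : Finset ℕ),
      tnorm N m' (restr E e) ≤ if s ∈ E then (1/2) * N e else 0 := by
    intro m' hm' E
    split_ifs with hsE
    · rw [restr_single, if_pos hsE, ← he]
      apply Real.sSup_le _ (by positivity)
      rintro r ⟨F, hF, rfl⟩
      have hsum : ∑ j, N (restr (F j) e) ≤ N e := by
        have : ∀ j, N (restr (F j) e) = if s ∈ F j then N e else 0 := by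
          intro j
          rw [he, restr_single]
          split_ifs with h
          · rw [← he]
          · exact N_zero hN
        rw [Finset.sum_congr rfl (fun j _ => this j)]
        exact sum_ite_unique (fun i j hi hj => pairwiseLT_unique hF hi hj) hNe
      have h1 : (1 / (m' : ℝ)) ≤ 1/2 := by
        apply one_div_le_one_div_of_le (by norm_num)
        exact_mod_cast hm'
      have h0 : (0:ℝ) ≤ 1 / (m' : ℝ) := by positivity
      calc (1 / (m' : ℝ)) * ∑ j, N (restr (F j) e)
          ≤ (1 / (m' : ℝ)) * N e := mul_le_mul_of_nonneg_left hsum h0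
        _ ≤ (1/2) * N e := mul_le_mul_of_nonneg_right h1 hNe
    · rw [restr_single, if_neg hsE]
      apply Real.sSup_le _ le_rfl
      rintro r ⟨F, hF, rfl⟩
      have : ∀ j : Fin m', N (restr (F j) 0) = 0 := by
        intro j; rw [restr_zero, N_zero hN]
      rw [Finset.sum_congr rfl (fun j _ => this j)]
      simp
  -- every member of the big sup set is at most (1/2) N e
  have hB : sSup {r | ∃ (ℓ : ℕ) (m : Fin ℓ → ℕ) (E : Fin ℓ → Finset ℕ), Admissible ℓ m E ∧
      r = (1 / f ℓ) * ∑ i, tnorm N (m i) (restr (E i) e)} ≤ (1/2) * N e := by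
    apply Real.sSup_le _ (mul_nonneg (by norm_num) hNe)
    rintro r ⟨ℓ, m, E, hadm, rfl⟩
    rcases Nat.eq_zero_or_pos ℓ with rfl | hℓ
    · rw [Finset.univ_eq_empty, Finset.sum_empty, mul_zero]
      exact mul_nonneg (by norm_num) hNe
    · have hsum : ∑ i, tnorm N (m i) (restr (E i) e) ≤ (1/2) * N e := by
        calc ∑ i, tnorm N (m i) (restr (E i) e)
            ≤ ∑ i, (if s ∈ E i then (1/2) * N e else 0) :=
              Finset.sum_le_sum (fun i _ => htn (m i) (hadm.1 i) (E i))
          _ ≤ (1/2) * N e :=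
              sum_ite_unique (fun i j hi hj => pairwiseLT_unique hadm.2.2.1 hi hj)
                (by positivity)
      have hf1 : 1 ≤ f ℓ := f_one_le (by exact_mod_cast hℓ)
      have h0 : (0:ℝ) ≤ 1 / f ℓ := by positivity
      have h1 : 1 / f ℓ ≤ 1 := by
        rw [div_le_one (by linarith)]; linarith
      calc (1 / f ℓ) * ∑ i, tnorm N (m i) (restr (E i) e)
          ≤ (1 / f ℓ) * ((1/2) * N e) := by
            apply mul_le_mul_of_nonneg_left hsum h0
        _ ≤ 1 * ((1/2) * N e) := mul_le_mul_of_nonneg_right h1 (mul_nonneg (by norm_num) hNe)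
        _ = (1/2) * N e := one_mul _
  have hbig : N e ≤ max 1 ((1/2) * N e) :=
    calc N e = max (supNorm e) _ := hEq e
      _ ≤ max 1 ((1/2) * N e) := max_le_max (supNorm_single_le s) hB
  by_contra hcon
  push_neg at hcon
  have : max 1 ((1/2) * N e) < N e := max_lt hcon (by linarith)
  linarith

lemma N_le_Bsum (hN : IsNorm N) (hEq : Eq22 N) (x : C00) : N x ≤ Bsum x := by
  classical
  have hx : x = ∑ s ∈ x.support, Finsupp.single s (x s) := (Finsupp.sum_single x).symm
  calc N x = N (∑ s ∈ x.support, Finsupp.single s (x s)) := by rw [← hx]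
    _ ≤ ∑ s ∈ x.support, N (Finsupp.single s (x s)) := N_sum_le hN _ _
    _ ≤ ∑ s ∈ x.support, |x s| := by
        apply Finset.sum_le_sum
        intro s _
        have : Finsupp.single s (x s) = (x s) • Finsupp.single s (1:ℝ) := by
          rw [Finsupp.smul_single', mul_one]
        rw [this, hN.2.1]
        calc |x s| * N (Finsupp.single s (1:ℝ)) ≤ |x s| * 1 :=
              mul_le_mul_of_nonneg_left (N_single_le_one hN hEq s) (abs_nonneg _)
          _ = |x s| := mul_one _
    _ = Bsum x := rfl

lemma sum_Bsum_restr_le {ℓ : ℕ} {G : Fin ℓ → Finset ℕ}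
    (hG : ∀ i j : Fin ℓ, i < j → FinsetLT (G i) (G j)) (z : C00) :
    ∑ j, Bsum (restr (G j) z) ≤ Bsum z := by
  classical
  have hrw : ∀ j : Fin ℓ, Bsum (restr (G j) z) = ∑ s ∈ z.support.filter (· ∈ G j), |z s| :=
    fun j => Bsum_restr _ _
  rw [Finset.sum_congr rfl (fun j _ => hrw j)]
  set A : Fin ℓ → Finset ℕ := fun j => z.support.filter (· ∈ G j) with hA
  have hdisj : ((Finset.univ : Finset (Fin ℓ)) : Set (Fin ℓ)).PairwiseDisjoint A := by
    intro a _ b _ hab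
    show Disjoint (A a) (A b)
    apply Finset.disjoint_left.mpr
    intro s hsa hsb
    exact hab (pairwiseLT_unique hG (Finset.mem_filter.mp hsa).2 (Finset.mem_filter.mp hsb).2)
  calc ∑ j, ∑ s ∈ A j, |z s| = ∑ s ∈ Finset.univ.biUnion A, |z s| :=
        (Finset.sum_biUnion hdisj).symm
    _ ≤ ∑ s ∈ z.support, |z s| := by
        apply Finset.sum_le_sum_of_subset_of_nonneg _ (fun _ _ _ => abs_nonneg _)
        intro s hs
        obtain ⟨j, _, hj⟩ := Finset.mem_biUnion.mp hs
        exact (Finset.mem_filter.mp hj).1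
    _ = Bsum z := rfl

lemma one_div_nat_mul_le {m : ℕ} {S c : ℝ} (h0 : 0 ≤ S) (hS : S ≤ c) :
    (1 / (m : ℝ)) * S ≤ c := by
  rcases Nat.eq_zero_or_pos m with rfl | hm
  · simpa using le_trans h0 hS
  · have hm' : (1:ℝ) ≤ m := by exact_mod_cast hm
    have h1 : (1 / (m : ℝ)) ≤ 1 := by
      rw [div_le_one (by linarith)]; linarith
    calc (1 / (m : ℝ)) * S ≤ 1 * S := mul_le_mul_of_nonneg_right h1 h0
      _ = S := one_mul _
      _ ≤ c := hS

lemma tnorm_set_le_Bsum (hN : IsNorm N) (hEq : Eq22 N) (m : ℕ) (z : C00) :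
    ∀ r ∈ {r | ∃ F : Fin m → Finset ℕ,
      (∀ i j : Fin m, i < j → FinsetLT (F i) (F j)) ∧
      r = (1 / (m : ℝ)) * ∑ i, N (restr (F i) z)}, r ≤ Bsum z := by
  rintro r ⟨F, hF, rfl⟩
  apply one_div_nat_mul_le (Finset.sum_nonneg fun j _ => N_nonneg hN _)
  calc ∑ j, N (restr (F j) z) ≤ ∑ j, Bsum (restr (F j) z) :=
        Finset.sum_le_sum fun j _ => N_le_Bsum hN hEq _
    _ ≤ Bsum z := sum_Bsum_restr_le hF z

lemma tnorm_le_Bsum (hN : IsNorm N) (hEq : Eq22 N) (m : ℕ) (z : C00) :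
    tnorm N m z ≤ Bsum z :=
  Real.sSup_le (tnorm_set_le_Bsum hN hEq m z) (Bsum_nonneg z)

lemma tnorm_nonneg (hN : IsNorm N) (hEq : Eq22 N) (m : ℕ) (z : C00) :
    0 ≤ tnorm N m z := by
  apply le_csSup ⟨Bsum z, tnorm_set_le_Bsum hN hEq m z⟩
  refine ⟨fun _ => ∅, fun i j _ => by intro a ha; simp at ha, ?_⟩
  rw [Finset.sum_congr rfl (fun j _ => by rw [restr_empty, N_zero hN])]
  simp

lemma bigset_le_Bsum (hN : IsNorm N) (hEq : Eq22 N) (x : C00) :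
    ∀ r ∈ {r | ∃ (ℓ : ℕ) (m : Fin ℓ → ℕ) (E : Fin ℓ → Finset ℕ), Admissible ℓ m E ∧
      r = (1 / f ℓ) * ∑ i, tnorm N (m i) (restr (E i) x)}, r ≤ Bsum x := by
  rintro r ⟨ℓ, m, E, hadm, rfl⟩
  rcases Nat.eq_zero_or_pos ℓ with rfl | hℓ
  · rw [Finset.univ_eq_empty, Finset.sum_empty, mul_zero]
    exact Bsum_nonneg x
  · have hf1 : 1 ≤ f ℓ := f_one_le (by exact_mod_cast hℓ)
    have hsum : ∑ i, tnorm N (m i) (restr (E i) x) ≤ Bsum x := by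
      calc ∑ i, tnorm N (m i) (restr (E i) x)
          ≤ ∑ i, Bsum (restr (E i) x) :=
            Finset.sum_le_sum fun i _ => tnorm_le_Bsum hN hEq _ _
        _ ≤ Bsum x := sum_Bsum_restr_le hadm.2.2.1 x
    have h0 : 0 ≤ ∑ i, tnorm N (m i) (restr (E i) x) :=
      Finset.sum_nonneg fun i _ => tnorm_nonneg hN hEq _ _
    have h1 : 1 / f ℓ ≤ 1 := by rw [div_le_one (by linarith)]; linarith
    calc (1 / f ℓ) * ∑ i, tnorm N (m i) (restr (E i) x)
        ≤ 1 * ∑ i, tnorm N (m i) (restr (E i) x) :=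
          mul_le_mul_of_nonneg_right h1 h0
      _ ≤ Bsum x := by rw [one_mul]; exact hsum

lemma N_restr_le (hN : IsNorm N) (hEq : Eq22 N) (E : Finset ℕ) (x : C00) :
    N (restr E x) ≤ N x := by
  classical
  rw [hEq (restr E x)]
  apply max_le
  · exact le_trans (supNorm_restr_le E x) (by rw [hEq x]; exact le_max_left _ _)
  · apply Real.sSup_le _ (N_nonneg hN x)
    rintro r ⟨ℓ, m, E', hadm, rfl⟩
    have hmem : (1 / f ℓ) * ∑ i, tnorm N (m i) (restr (E' i) (restr E x)) ∈
        {r | ∃ (ℓ : ℕ) (m : Fin ℓ → ℕ) (E : Fin ℓ → Finset ℕ), Admissible ℓ m E ∧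
          r = (1 / f ℓ) * ∑ i, tnorm N (m i) (restr (E i) x)} := by
      refine ⟨ℓ, m, fun i => E' i ∩ E, ⟨hadm.1, hadm.2.1, ?_, ?_⟩, ?_⟩
      · intro i j hij
        exact FinsetLT_mono (hadm.2.2.1 i j hij) (Finset.inter_subset_left)
          (Finset.inter_subset_left)
      · intro i j hij
        refine lt_of_le_of_lt ?_ (hadm.2.2.2 i j hij)
        apply Finset.sum_le_sum
        intro t _
        exact_mod_cast Finset.card_le_card (Finset.inter_subset_left)
      · congr 1
        apply Finset.sum_congr rfl
        intro i _
        rw [restr_restr]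
    calc (1 / f ℓ) * ∑ i, tnorm N (m i) (restr (E' i) (restr E x))
        ≤ sSup {r | ∃ (ℓ : ℕ) (m : Fin ℓ → ℕ) (E : Fin ℓ → Finset ℕ), Admissible ℓ m E ∧
            r = (1 / f ℓ) * ∑ i, tnorm N (m i) (restr (E i) x)} :=
          le_csSup ⟨Bsum x, bigset_le_Bsum hN hEq x⟩ hmem
      _ ≤ N x := by rw [hEq x]; exact le_max_right _ _

lemma tnorm_le_N (hN : IsNorm N) (hEq : Eq22 N) (m : ℕ) (z : C00) :
    tnorm N m z ≤ N z := by
  apply Real.sSup_le _ (N_nonneg hN z)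
  rintro r ⟨F, hF, rfl⟩
  apply div_nat_mul_le _ (N_nonneg hN z)
  calc ∑ j, N (restr (F j) z) ≤ ∑ _j : Fin m, N z :=
        Finset.sum_le_sum fun j _ => N_restr_le hN hEq _ _
    _ = (m : ℝ) * N z := by rw [Finset.sum_const, Finset.card_univ, Fintype.card_fin,
        nsmul_eq_mul]

end B

section C
variable {N : C00 → ℝ}

lemma supNorm_le_N (hEq : Eq22 N) (x : C00) : supNorm x ≤ N x := by
  rw [hEq x]; exact le_max_left _ _

lemma staircase {m k : ℕ} (J : Fin k → Finset (Fin m))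
    (hkey : ∀ t t' : Fin k, t < t' → ∀ j ∈ J t, ∀ j' ∈ J t', j ≤ j') :
    ∑ t, (J t).card ≤ m + k := by
  classical
  set K : Fin k → Finset (Fin m) :=
    fun t => (J t).filter (fun j => ∀ t' : Fin k, t' < t → j ∉ J t') with hK
  have hKJ : ∀ t, K t ⊆ J t := fun t => Finset.filter_subset _ _
  have hmemK : ∀ t a, a ∈ J t → a ∉ K t → ∃ t', t' < t ∧ a ∈ J t' := by
    intro t a haJ haK
    simp only [hK, Finset.mem_filter, not_and, not_forall, not_not] at haK
    obtain ⟨t', ht', ha⟩ := haK haJ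
    exact ⟨t', ht', ha⟩
  have h1 : ∀ t, (J t).card ≤ (K t).card + 1 := by
    intro t
    have hs : ((J t) \ (K t)).card ≤ 1 := by
      apply Finset.card_le_one.mpr
      intro a ha b hb
      obtain ⟨haJ, haK⟩ := Finset.mem_sdiff.mp ha
      obtain ⟨hbJ, hbK⟩ := Finset.mem_sdiff.mp hb
      obtain ⟨ta, hta, haJ'⟩ := hmemK t a haJ haK
      obtain ⟨tb, htb, hbJ'⟩ := hmemK t b hbJ hbK
      exact le_antisymm (hkey ta t hta a haJ' b hbJ) (hkey tb t htb b hbJ' a haJ)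
    have := Finset.card_sdiff_add_card_eq_card (hKJ t)
    omega
  have hd : ∀ a ∈ (Finset.univ : Finset (Fin k)), ∀ b ∈ Finset.univ, a ≠ b →
      Disjoint (K a) (K b) := by
    have key : ∀ a b : Fin k, a < b → Disjoint (K a) (K b) := by
      intro a b hab
      apply Finset.disjoint_left.mpr
      intro j hja hjb
      simp only [hK, Finset.mem_filter] at hja hjb
      exact hjb.2 a hab hja.1
    intro a _ b _ hab
    rcases lt_or_gt_of_ne hab with h | h
    · exact key a b h
    · exact (key b a h).symm
  have h2 : ∑ t, (K t).card ≤ m := by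
    calc ∑ t, (K t).card = (Finset.univ.biUnion K).card := (Finset.card_biUnion hd).symm
      _ ≤ Fintype.card (Fin m) := Finset.card_le_univ _
      _ = m := Fintype.card_fin m
  calc ∑ t, (J t).card ≤ ∑ t, ((K t).card + 1) := Finset.sum_le_sum fun t _ => h1 t
    _ = (∑ t, (K t).card) + k := by
        rw [Finset.sum_add_distrib]
        simp
    _ ≤ m + k := by omega

lemma incidence {m k : ℕ} (G : Fin m → Finset ℕ) (D : Fin k → Finset ℕ)
    (hG : ∀ i j : Fin m, i < j → FinsetLT (G i) (G j))
    (hD : ∀ i j : Fin k, i < j → FinsetLT (D i) (D j)) :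
    ∑ j : Fin m, ∑ t : Fin k, (if ((G j) ∩ (D t)).Nonempty then (1:ℝ) else 0)
      ≤ (m : ℝ) + k := by
  classical
  rw [Finset.sum_comm]
  set J : Fin k → Finset (Fin m) :=
    fun t => Finset.univ.filter (fun j => ((G j) ∩ (D t)).Nonempty) with hJ
  have hrw : ∀ t : Fin k,
      ∑ j : Fin m, (if ((G j) ∩ (D t)).Nonempty then (1:ℝ) else 0) = ((J t).card : ℝ) := by
    intro t
    rw [hJ]
    exact Finset.sum_boole _ _
  rw [Finset.sum_congr rfl (fun t _ => hrw t)]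
  have hkey : ∀ t t' : Fin k, t < t' → ∀ j ∈ J t, ∀ j' ∈ J t', j ≤ j' := by
    intro t t' htt j hj j' hj'
    simp only [hJ, Finset.mem_filter] at hj hj'
    obtain ⟨s, hs⟩ := hj.2
    obtain ⟨s', hs'⟩ := hj'.2
    obtain ⟨hsG, hsD⟩ := Finset.mem_inter.mp hs
    obtain ⟨hsG', hsD'⟩ := Finset.mem_inter.mp hs'
    by_contra hcon
    push_neg at hcon
    have h1 : s' < s := hG j' j hcon s' hsG' s hsG
    have h2 : s < s' := hD t t' htt s hsD s' hsD'
    omega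
  have := staircase J hkey
  calc ∑ t, ((J t).card : ℝ) = ((∑ t, (J t).card : ℕ) : ℝ) := by push_cast; rfl
    _ ≤ ((m + k : ℕ) : ℝ) := by exact_mod_cast this
    _ = (m : ℝ) + k := by push_cast; rfl

lemma l1_split (hN : IsNorm N) (hEq : Eq22 N) {k : ℕ} {w : C00} {z : Fin k → C00}
    (hz : ∀ i j : Fin k, i < j → FinsetLT (z i).support (z j).support)
    (hz1 : ∀ t, N (z t) = 1)
    (hw : w = ((k : ℝ))⁻¹ • ∑ t, z t)
    {m : ℕ} (G : Fin m → Finset ℕ)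
    (hG : ∀ i j : Fin m, i < j → FinsetLT (G i) (G j)) :
    ∑ j, N (restr (G j) w) ≤ (k:ℝ)⁻¹ * ((m : ℝ) + k) := by
  have hki : (0:ℝ) ≤ (k:ℝ)⁻¹ := by positivity
  have step1 : ∀ j, N (restr (G j) w) ≤
      (k:ℝ)⁻¹ * ∑ t, (if ((G j) ∩ (z t).support).Nonempty then (1:ℝ) else 0) := by
    intro j
    rw [hw, restr_smul, hN.2.1, abs_of_nonneg hki]
    apply mul_le_mul_of_nonneg_left _ hki
    rw [restr_sum]
    calc N (∑ t, restr (G j) (z t)) ≤ ∑ t, N (restr (G j) (z t)) := N_sum_le hN _ _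
      _ ≤ ∑ t, (if ((G j) ∩ (z t).support).Nonempty then (1:ℝ) else 0) := by
          apply Finset.sum_le_sum
          intro t _
          split_ifs with h
          · rw [← hz1 t]
            exact N_restr_le hN hEq _ _
          · rw [restr_eq_zero h, N_zero hN]
  calc ∑ j, N (restr (G j) w)
      ≤ ∑ j, (k:ℝ)⁻¹ * ∑ t, (if ((G j) ∩ (z t).support).Nonempty then (1:ℝ) else 0) :=
        Finset.sum_le_sum fun j _ => step1 j
    _ = (k:ℝ)⁻¹ * ∑ j, ∑ t, (if ((G j) ∩ (z t).support).Nonempty then (1:ℝ) else 0) := by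
        rw [Finset.mul_sum]
    _ ≤ (k:ℝ)⁻¹ * ((m : ℝ) + k) :=
        mul_le_mul_of_nonneg_left (incidence G _ hG hz) hki

lemma coord_avg (hN : IsNorm N) (hEq : Eq22 N) {k : ℕ} {z : Fin k → C00}
    (hz : ∀ i j : Fin k, i < j → FinsetLT (z i).support (z j).support)
    (hz1 : ∀ t, N (z t) = 1) (s : ℕ) :
    |(((k : ℝ))⁻¹ • ∑ t, z t : C00) s| ≤ ((k:ℝ))⁻¹ := by
  have hki : (0:ℝ) ≤ (k:ℝ)⁻¹ := by positivity
  have happ : (((k : ℝ))⁻¹ • ∑ t, z t : C00) s = (k:ℝ)⁻¹ * ∑ t, z t s := by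
    rw [Finsupp.smul_apply, Finsupp.finset_sum_apply, smul_eq_mul]
  rw [happ, abs_mul, abs_of_nonneg hki]
  have hin : |∑ t, z t s| ≤ 1 := by
    calc |∑ t, z t s| ≤ ∑ t, |z t s| := Finset.abs_sum_le_sum_abs _ _
      _ ≤ ∑ t, (if s ∈ (z t).support then (1:ℝ) else 0) := by
          apply Finset.sum_le_sum
          intro t _
          split_ifs with h
          · calc |z t s| ≤ supNorm (z t) := abs_apply_le_supNorm _ _
              _ ≤ N (z t) := supNorm_le_N hEq _
              _ = 1 := hz1 t
          · rw [Finsupp.notMem_support_iff.mp h, abs_zero]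
      _ ≤ 1 := sum_ite_unique (fun i j hi hj => pairwiseLT_unique hz hi hj) (by norm_num)
  calc (k:ℝ)⁻¹ * |∑ t, z t s| ≤ (k:ℝ)⁻¹ * 1 := mul_le_mul_of_nonneg_left hin hki
    _ = (k:ℝ)⁻¹ := mul_one _

end C

set_option maxHeartbeats 1000000 in
/-- Remark 2.6. -/
theorem statement10 (N : C00 → ℝ) (hN : IsNorm N) (hEq : Eq22 N)
    (n : ℕ) (x : Fin n → C00) (hx : BlockSeqFin x)
    (k : Fin n → ℕ) (havg : ∀ i, IsLpAverage N 1 (k i) 2 (x i))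
    (k0 : ℕ) (hk0 : IsLeast (Set.range k) k0)
    (ℓ : ℕ) (hℓ : (f ℓ - 1) / (ℓ : ℝ) > 12 * n * (k0 : ℝ) ^ (-(1 / 2) : ℝ))
    (a : Fin n → ℝ) (ha : ∀ i, |a i| ≤ 1)
    (hone : N (∑ i, a i • x i) = 1) :
    normL N ℓ (∑ i, a i • x i) < N (∑ i, a i • x i) := by
  classical
  obtain ⟨hxne, _hxlt⟩ := hx
  set y : C00 := ∑ i, a i • x i with hy
  -- unpack the averages
  have havg' : ∀ p : Fin n, ∃ z : Fin (k p) → C00, BlockSeqFin z ∧ (∀ t, N (z t) = 1) ∧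
      (∀ a : Fin (k p) → ℝ,
        (2:ℝ)⁻¹ * (∑ t, |a t| ^ (1:ℝ)) ^ (1 / (1:ℝ)) ≤ N (∑ t, a t • z t) ∧
        N (∑ t, a t • z t) ≤ 2 * (∑ t, |a t| ^ (1:ℝ)) ^ (1 / (1:ℝ))) ∧
      x p = ((k p : ℝ) ^ (-(1 / (1:ℝ)))) • ∑ t, z t := havg
  choose z hzb hz1 _hzbd hxz using havg'
  have hzlt : ∀ p : Fin n, ∀ i j : Fin (k p), i < j →
      FinsetLT (z p i).support (z p j).support := fun p => (hzb p).2
  have hxp : ∀ p : Fin n, x p = ((k p : ℝ))⁻¹ • ∑ t, z p t := by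
    intro p
    rw [hxz p]
    congr 1
    have h1 : (-(1 / (1:ℝ))) = (-1 : ℝ) := by norm_num
    rw [h1, Real.rpow_neg_one]
  -- k p ≥ 1 etc
  have hk1 : ∀ p : Fin n, 1 ≤ k p := by
    intro p
    rcases Nat.eq_zero_or_pos (k p) with h | h
    · exfalso
      apply hxne p
      haveI : IsEmpty (Fin (k p)) := by rw [h]; infer_instance
      rw [hxp p, Finset.univ_eq_empty, Finset.sum_empty, smul_zero]
    · exact h
  obtain ⟨p₀, hp₀⟩ : ∃ p : Fin n, k p = k0 := hk0.1
  have hnpos : 0 < n := p₀.pos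
  have hk0pos : 1 ≤ k0 := hp₀ ▸ hk1 p₀
  have hk0le : ∀ p : Fin n, (k0 : ℝ) ≤ (k p : ℝ) := by
    intro p
    exact_mod_cast hk0.2 ⟨p, rfl⟩
  have hk0posR : (0:ℝ) < (k0 : ℝ) := by exact_mod_cast hk0pos
  -- square root facts
  set sk : ℝ := Real.sqrt k0 with hsk
  have hsk1 : 1 ≤ sk := Real.one_le_sqrt.mpr (by exact_mod_cast hk0pos)
  have hskpos : 0 < sk := lt_of_lt_of_le one_pos hsk1
  have hsk2 : sk * sk = (k0 : ℝ) := Real.mul_self_sqrt (by positivity)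
  have hrpow : (k0 : ℝ) ^ (-(1 / 2) : ℝ) = 1 / sk := by
    rw [Real.rpow_neg (by positivity), ← Real.sqrt_eq_rpow, ← hsk, one_div]
  rw [hrpow] at hℓ
  -- ℓ ≥ 1 and the main numeric consequence
  have hl1 : 1 ≤ ℓ := by
    rcases Nat.eq_zero_or_pos ℓ with h | h
    · exfalso
      rw [h] at hℓ
      have h0 : ((0:ℕ):ℝ) = 0 := by norm_cast
      rw [h0, div_zero] at hℓ
      have : (0:ℝ) < 12 * n * (1 / sk) := by positivity
      linarith
    · exact h
  have hlposR : (0:ℝ) < (ℓ : ℝ) := by exact_mod_cast hl1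
  have h12 : 12 * (n:ℝ) * (1 / sk) * ℓ < f ℓ - 1 := by
    rw [gt_iff_lt, lt_div_iff₀ hlposR] at hℓ
    exact hℓ
  have hf1 : 1 ≤ f ℓ := f_one_le (by exact_mod_cast hl1)
  have hfpos : 0 < f ℓ := lt_of_lt_of_le one_pos hf1
  -- coordinates of y are small
  have hcoordy : ∀ s : ℕ, |y s| ≤ (n:ℝ) / k0 := by
    intro s
    have happ : y s = ∑ p, a p * x p s := by
      rw [hy, Finsupp.finset_sum_apply]
      apply Finset.sum_congr rfl
      intro p _
      rw [Finsupp.smul_apply, smul_eq_mul]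
    rw [happ]
    calc |∑ p, a p * x p s| ≤ ∑ p, |a p * x p s| := Finset.abs_sum_le_sum_abs _ _
      _ ≤ ∑ _p : Fin n, (1 : ℝ) / k0 := by
          apply Finset.sum_le_sum
          intro p _
          rw [abs_mul]
          have h1 : |x p s| ≤ ((k p : ℝ))⁻¹ := by
            rw [hxp p]
            exact coord_avg hN hEq (hzlt p) (hz1 p) s
          have h2 : ((k p : ℝ))⁻¹ ≤ (k0 : ℝ)⁻¹ :=
            inv_anti₀ hk0posR (hk0le p)
          calc |a p| * |x p s| ≤ 1 * |x p s| :=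
                mul_le_mul_of_nonneg_right (ha p) (abs_nonneg _)
            _ = |x p s| := one_mul _
            _ ≤ (k0 : ℝ)⁻¹ := le_trans h1 h2
            _ = 1 / k0 := (one_div _).symm
      _ = (n:ℝ) / k0 := by
          rw [Finset.sum_const, Finset.card_univ, Fintype.card_fin, nsmul_eq_mul]
          ring
  -- bound each member of the defining set of normL
  have hkey : ∀ r ∈ {r | ∃ (m : Fin ℓ → ℕ) (E : Fin ℓ → Finset ℕ), Admissible ℓ m E ∧
      r = (1 / f ℓ) * ∑ i, tnorm N (m i) (restr (E i) y)},
      r ≤ (1 + 3 * n * ℓ * (1 / sk)) / f ℓ := by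
    rintro r ⟨m, E, hadm, rfl⟩
    obtain ⟨hadm1, hadm2, hadm3, hadm4⟩ := hadm
    set T : Fin ℓ → ℝ := fun i => tnorm N (m i) (restr (E i) y) with hT
    have hTnn : ∀ i, 0 ≤ T i := fun i => tnorm_nonneg hN hEq _ _
    -- bound 1 : T i ≤ 1
    have tbound1 : ∀ i, T i ≤ 1 := by
      intro i
      calc T i ≤ N (restr (E i) y) := tnorm_le_N hN hEq _ _
        _ ≤ N y := N_restr_le hN hEq _ _
        _ = 1 := hone
    -- bound 2 : T i ≤ n / m i + n / k0
    have tbound2 : ∀ i, T i ≤ (n:ℝ) / (m i) + (n:ℝ) / k0 := by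
      intro i
      have hmi : (0:ℝ) < (m i : ℝ) := by
        have := hadm1 i; positivity
      apply Real.sSup_le _ (by positivity)
      rintro r ⟨F, hF, rfl⟩
      apply div_nat_mul_le _ (by positivity)
      have hstep : ∀ j : Fin (m i), N (restr (F j) (restr (E i) y)) ≤
          ∑ p, N (restr (F j ∩ E i) (x p)) := by
        intro j
        rw [restr_restr]
        have : restr (F j ∩ E i) y = ∑ p, a p • restr (F j ∩ E i) (x p) := by
          rw [hy, restr_sum]
          apply Finset.sum_congr rfl
          intro p _
          rw [restr_smul]
        rw [this]
        calc N (∑ p, a p • restr (F j ∩ E i) (x p))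
            ≤ ∑ p, N (a p • restr (F j ∩ E i) (x p)) := N_sum_le hN _ _
          _ ≤ ∑ p, N (restr (F j ∩ E i) (x p)) := by
              apply Finset.sum_le_sum
              intro p _
              rw [hN.2.1]
              calc |a p| * N (restr (F j ∩ E i) (x p))
                  ≤ 1 * N (restr (F j ∩ E i) (x p)) :=
                    mul_le_mul_of_nonneg_right (ha p) (N_nonneg hN _)
                _ = N (restr (F j ∩ E i) (x p)) := one_mul _
      have hswap : ∑ j : Fin (m i), N (restr (F j) (restr (E i) y)) ≤
          ∑ p : Fin n, ∑ j : Fin (m i), N (restr (F j ∩ E i) (x p)) := by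
        rw [Finset.sum_comm]
        exact Finset.sum_le_sum fun j _ => hstep j
      have hper : ∀ p : Fin n, ∑ j : Fin (m i), N (restr (F j ∩ E i) (x p)) ≤
          1 + (m i : ℝ) / k0 := by
        intro p
        have hkp : (0:ℝ) < (k p : ℝ) := by
          have := hk1 p; positivity
        have := l1_split hN hEq (hzlt p) (hz1 p) (hxp p)
          (G := fun j => F j ∩ E i)
          (fun i' j' hij => FinsetLT_mono (hF i' j' hij)
            Finset.inter_subset_left Finset.inter_subset_left)
        calc ∑ j : Fin (m i), N (restr (F j ∩ E i) (x p))
            ≤ ((k p : ℝ))⁻¹ * ((m i : ℝ) + k p) := this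
          _ = (m i : ℝ) / k p + 1 := by field_simp
          _ ≤ 1 + (m i : ℝ) / k0 := by
              have : (m i : ℝ) / k p ≤ (m i : ℝ) / k0 :=
                div_le_div_of_nonneg_left (by positivity) hk0posR (hk0le p)
              linarith
      calc ∑ j : Fin (m i), N (restr (F j) (restr (E i) y))
          ≤ ∑ p : Fin n, (1 + (m i : ℝ) / k0) :=
            le_trans hswap (Finset.sum_le_sum fun p _ => hper p)
        _ = (n : ℝ) * (1 + (m i : ℝ) / k0) := by
            rw [Finset.sum_const, Finset.card_univ, Fintype.card_fin, nsmul_eq_mul]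
        _ = (m i : ℝ) * ((n:ℝ) / (m i) + (n:ℝ) / k0) := by
            field_simp
    -- bound 3 : T i ≤ card (E i) * (n / k0)
    have tbound3 : ∀ i, T i ≤ ((E i).card : ℝ) * ((n:ℝ) / k0) := by
      intro i
      calc T i ≤ N (restr (E i) y) := tnorm_le_N hN hEq _ _
        _ ≤ Bsum (restr (E i) y) := N_le_Bsum hN hEq _
        _ = ∑ s ∈ y.support.filter (· ∈ E i), |y s| := Bsum_restr _ _
        _ ≤ (y.support.filter (· ∈ E i)).card • ((n:ℝ) / k0) :=
            Finset.sum_le_card_nsmul _ _ _ (fun s _ => hcoordy s)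
        _ = ((y.support.filter (· ∈ E i)).card : ℝ) * ((n:ℝ) / k0) := nsmul_eq_mul _ _
        _ ≤ ((E i).card : ℝ) * ((n:ℝ) / k0) := by
            apply mul_le_mul_of_nonneg_right _ (by positivity)
            have hsub : y.support.filter (· ∈ E i) ⊆ E i := fun s hs =>
              (Finset.mem_filter.mp hs).2
            exact_mod_cast Finset.card_le_card hsub
    -- split into small and large m i
    set Sm : Finset (Fin ℓ) := Finset.univ.filter (fun i => (m i : ℝ) ≤ sk) with hSm
    have hsplit : ∑ i, T i =
        (∑ i ∈ Sm, T i) + ∑ i ∈ Finset.univ.filter (fun i => ¬ ((m i : ℝ) ≤ sk)), T i :=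
      (Finset.sum_filter_add_sum_filter_not _ _ _).symm
    have hlarge : ∑ i ∈ Finset.univ.filter (fun i => ¬ ((m i : ℝ) ≤ sk)), T i ≤
        (ℓ : ℝ) * (2 * n * (1 / sk)) := by
      have hbound : ∀ i ∈ Finset.univ.filter (fun i => ¬ ((m i : ℝ) ≤ sk)),
          T i ≤ 2 * n * (1 / sk) := by
        intro i hi
        have hski : sk < (m i : ℝ) := by
          have := (Finset.mem_filter.mp hi).2
          push_neg at this
          exact this
        have h1 : (n:ℝ) / (m i) ≤ (n:ℝ) / sk :=
          div_le_div_of_nonneg_left (by positivity) hskpos hski.le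
        have h2 : (n:ℝ) / k0 ≤ (n:ℝ) / sk := by
          apply div_le_div_of_nonneg_left (by positivity) hskpos
          calc sk = sk * 1 := (mul_one _).symm
            _ ≤ sk * sk := by nlinarith
            _ = (k0:ℝ) := hsk2
        calc T i ≤ (n:ℝ) / (m i) + (n:ℝ) / k0 := tbound2 i
          _ ≤ (n:ℝ) / sk + (n:ℝ) / sk := add_le_add h1 h2
          _ = 2 * n * (1 / sk) := by ring
      calc ∑ i ∈ Finset.univ.filter (fun i => ¬ ((m i : ℝ) ≤ sk)), T i
          ≤ (Finset.univ.filter (fun i => ¬ ((m i : ℝ) ≤ sk))).card • (2 * n * (1 / sk)) :=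
            Finset.sum_le_card_nsmul _ _ _ hbound
        _ = ((Finset.univ.filter (fun i => ¬ ((m i : ℝ) ≤ sk))).card : ℝ) *
              (2 * n * (1 / sk)) := nsmul_eq_mul _ _
        _ ≤ (ℓ : ℝ) * (2 * n * (1 / sk)) := by
            apply mul_le_mul_of_nonneg_right _ (by positivity)
            have : (Finset.univ.filter (fun i => ¬ ((m i : ℝ) ≤ sk))).card ≤ ℓ := by
              calc (Finset.univ.filter (fun i => ¬ ((m i : ℝ) ≤ sk))).card
                  ≤ Fintype.card (Fin ℓ) := Finset.card_le_univ _
                _ = ℓ := Fintype.card_fin ℓ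
            exact_mod_cast this
    have hsmall : ∑ i ∈ Sm, T i ≤ 1 + (n:ℝ) * (1 / sk) := by
      rcases Finset.eq_empty_or_nonempty Sm with h | h
      · rw [h, Finset.sum_empty]
        positivity
      · set i₀ : Fin ℓ := Sm.max' h with hi₀
        have hi₀Sm : i₀ ∈ Sm := Sm.max'_mem h
        have hi₀sk : (m i₀ : ℝ) ≤ sk := (Finset.mem_filter.mp hi₀Sm).2
        rw [← Finset.sum_erase_add Sm T hi₀Sm]
        have hcards : ∑ i ∈ Sm.erase i₀, ((E i).card : ℝ) ≤ sk := by
          have hsub : Sm.erase i₀ ⊆ Finset.univ.filter (fun j => j < i₀) := by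
            intro j hj
            obtain ⟨hjne, hjSm⟩ := Finset.mem_erase.mp hj
            exact Finset.mem_filter.mpr ⟨Finset.mem_univ _,
              lt_of_le_of_ne (Sm.le_max' j hjSm) hjne⟩
          have hle : ∑ i ∈ Sm.erase i₀, ((E i).card : ℝ) ≤
              ∑ i ∈ Finset.univ.filter (fun j => j < i₀), ((E i).card : ℝ) :=
            Finset.sum_le_sum_of_subset_of_nonneg hsub (fun _ _ _ => by positivity)
          rcases Nat.eq_zero_or_pos (i₀ : ℕ) with h0 | h0
          · have hempty : Finset.univ.filter (fun j : Fin ℓ => j < i₀) = ∅ := by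
              apply Finset.eq_empty_of_forall_notMem
              intro j hj
              have := (Finset.mem_filter.mp hj).2
              have : (j : ℕ) < (i₀ : ℕ) := this
              omega
            rw [hempty, Finset.sum_empty] at hle
            linarith
          · obtain ⟨c, hc⟩ := Nat.exists_eq_succ_of_ne_zero (Nat.pos_iff_ne_zero.mp h0)
            have hcℓ : c < ℓ := by
              have := i₀.isLt
              omega
            set i₁ : Fin ℓ := ⟨c, hcℓ⟩ with hi₁
            have hsucc : (i₁ : ℕ) + 1 = (i₀ : ℕ) := by
              rw [hi₁]
              simp
              omega
            have hIic : Finset.univ.filter (fun j : Fin ℓ => j < i₀) = Finset.Iic i₁ := by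
              ext j
              simp only [Finset.mem_filter, Finset.mem_univ, true_and, Finset.mem_Iic]
              constructor
              · intro hj
                have hj' : (j : ℕ) < (i₀ : ℕ) := hj
                have : (j : ℕ) ≤ (i₁ : ℕ) := by omega
                exact this
              · intro hj
                have hj' : (j : ℕ) ≤ (i₁ : ℕ) := hj
                have : (j : ℕ) < (i₀ : ℕ) := by omega
                exact this
            have hadm' := hadm4 i₁ i₀ hsucc
            apply le_of_lt
            calc ∑ i ∈ Sm.erase i₀, ((E i).card : ℝ)
                ≤ ∑ i ∈ Finset.univ.filter (fun j => j < i₀), ((E i).card : ℝ) := hle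
              _ = ∑ i ∈ Finset.Iic i₁, ((E i).card : ℝ) := by rw [hIic]
              _ < f (m i₀) := hadm'
              _ ≤ (m i₀ : ℝ) := f_nat_le _
              _ ≤ sk := hi₀sk
        have herase : ∑ i ∈ Sm.erase i₀, T i ≤ (n:ℝ) * (1 / sk) := by
          calc ∑ i ∈ Sm.erase i₀, T i
              ≤ ∑ i ∈ Sm.erase i₀, ((E i).card : ℝ) * ((n:ℝ) / k0) :=
                Finset.sum_le_sum fun i _ => tbound3 i
            _ = (∑ i ∈ Sm.erase i₀, ((E i).card : ℝ)) * ((n:ℝ) / k0) :=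
                (Finset.sum_mul _ _ _).symm
            _ ≤ sk * ((n:ℝ) / k0) :=
                mul_le_mul_of_nonneg_right hcards (by positivity)
            _ = (n:ℝ) * (1 / sk) := by
                rw [← hsk2]
                field_simp
        linarith [tbound1 i₀, herase]
    have htotal : ∑ i, T i ≤ 1 + 3 * n * ℓ * (1 / sk) := by
      rw [hsplit]
      have h3 : (n:ℝ) * (1 / sk) + (ℓ : ℝ) * (2 * n * (1 / sk)) ≤ 3 * n * ℓ * (1 / sk) := by
        have hl1R : (1:ℝ) ≤ (ℓ : ℝ) := by exact_mod_cast hl1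
        have key : (n:ℝ) * (1 / sk) * 1 ≤ (n:ℝ) * (1 / sk) * ℓ :=
          mul_le_mul_of_nonneg_left hl1R (by positivity)
        nlinarith [key]
      linarith [hsmall, hlarge]
    have hrw2 : (1 + 3 * (n:ℝ) * ℓ * (1 / sk)) / f ℓ =
        (1 / f ℓ) * (1 + 3 * (n:ℝ) * ℓ * (1 / sk)) := by ring
    rw [hrw2]
    exact mul_le_mul_of_nonneg_left htotal (le_of_lt (one_div_pos.mpr hfpos))
  -- conclude
  have hsup : normL N ℓ y ≤ (1 + 3 * n * ℓ * (1 / sk)) / f ℓ :=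
    Real.sSup_le hkey (div_nonneg (by positivity) hfpos.le)
  have hlt : (1 + 3 * n * ℓ * (1 / sk)) / f ℓ < 1 := by
    rw [div_lt_one hfpos]
    have h9 : (0:ℝ) ≤ 9 * n * (1 / sk) * ℓ := by positivity
    nlinarith [h12]
  rw [hone]
  exact lt_of_le_of_lt hsup hlt
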